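/- Pruned-subtree characterization: let T be an ordinary Vernon tree with free variables X, C a corolla of T, and v ∈ FV(C)\X with σ(v) its partner. A subtree T' of T equals the subtree P(T,C,v) obtained by the pruning algorithm (the connected component of T minus C containing σ(v)) if and only if σ(v) ∈ FV(T') and FV(T')\{σ(v)} ⊆ X. -/

import Mathlib

/-- A family of operations (parameters) indexed by finite sets of variable names,
with a renaming action along permutations of ℕ
(corresponding to a functor `C : Bij^op → Set`). -/
structure OpFam where
  C : Finset ℕ → Type
  ren : (ρ : ℕ ≃ ℕ) → ∀ {X : Finset ℕ}, C X → C (X.image ρ)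

/-- A corolla: either an ordinary corolla `f(x₁,…,xₙ)` with `f ∈ C(X)`, or a
special corolla `(x, y)`. -/
inductive Corolla (F : OpFam) : Type
  | ord : {X : Finset ℕ} → F.C X → Corolla F
  | sp : ℕ → ℕ → Corolla F

/-- The free variables of a corolla. -/
def Corolla.fv {F : OpFam} : Corolla F → Finset ℕ
  | @Corolla.ord _ X _ => X
  | .sp x y => {x, y}

/-- A Vernon graph: a list of corollas together with an involution on variables. -/
structure EVGraph (F : OpFam) where
  cors : List (Corolla F)
  inv : ℕ → ℕ

/-- All variables occurring in a list of corollas. -/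
def varsL {F : OpFam} (cs : List (Corolla F)) : Finset ℕ :=
  cs.foldr (fun c s => c.fv ∪ s) ∅

/-- All variables of a Vernon graph. -/
def EVGraph.vars {F : OpFam} (G : EVGraph F) : Finset ℕ := varsL G.cors

/-- The free variables of a Vernon graph: the fixpoints of its involution. -/
def EVGraph.freeVars {F : OpFam} (G : EVGraph F) : Finset ℕ :=
  G.vars.filter (fun x => G.inv x = x)

/-- Adjacency of two corolla positions: they are joined by an edge of the
involution. -/
def adj {F : OpFam} (G : EVGraph F) (i j : Fin G.cors.length) : Prop :=
  i ≠ j ∧ ∃ x ∈ (G.cors.get i).fv, G.inv x ≠ x ∧ G.inv x ∈ (G.cors.get j).fv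

/-- Well-formedness of a Vernon graph as an *extended Vernon tree*: nonempty,
corollas have pairwise disjoint variables, `inv` is an involution fixing
everything outside the graph, no edge is a loop, the graph is connected, and
the number of half-edges paired by `inv` is `2·(#corollas − 1)` (so the graph
is a tree: no loops, multiple edges or cycles). -/
structure WF {F : OpFam} (G : EVGraph F) : Prop where
  nonempty : G.cors ≠ []
  disj : G.cors.Pairwise (fun c d => Disjoint c.fv d.fv)
  spOk : ∀ x y, Corolla.sp x y ∈ G.cors → x ≠ y
  invol : ∀ x, G.inv (G.inv x) = x
  fixOutside : ∀ x, x ∉ G.vars → G.inv x = x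
  closed : ∀ x ∈ G.vars, G.inv x ∈ G.vars
  noloop : ∀ c ∈ G.cors, ∀ x ∈ c.fv, G.inv x ≠ x → G.inv x ∉ c.fv
  conn : ∀ i j : Fin G.cors.length, Relation.ReflTransGen (adj G) i j
  treeCount : (G.vars.filter (fun x => G.inv x ≠ x)).card = 2 * (G.cors.length - 1)

/-- One step of the rewriting system on extended Vernon trees:
(1) contracting an edge between an ordinary corolla and a special corolla, and
(2) merging two special corollas sharing an edge; both closed under
rearrangement of the corolla lists. -/
inductive Step (F : OpFam) : EVGraph F → EVGraph F → Prop
  | contract {X : Finset ℕ} (f : F.C X) (x y z : ℕ) (rest : List (Corolla F))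
      (σ : ℕ → ℕ) (hx : x ∈ X) (hσ : σ x = y) (hz : z ∉ X) :
      Step F ⟨Corolla.ord f :: Corolla.sp y z :: rest, σ⟩
        ⟨Corolla.ord (F.ren (Equiv.swap x z) f) :: rest,
          fun v => if v = x ∨ v = y then v else σ v⟩
  | merge (x y u v : ℕ) (rest : List (Corolla F)) (σ : ℕ → ℕ) (h : σ y = u) :
      Step F ⟨Corolla.sp x y :: Corolla.sp u v :: rest, σ⟩
        ⟨Corolla.sp x v :: rest, fun w => if w = y ∨ w = u then w else σ w⟩
  | perm {cs cs' ds ds' : List (Corolla F)} {σ τ : ℕ → ℕ} :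
      cs.Perm cs' → ds.Perm ds' → Step F ⟨cs, σ⟩ ⟨ds, τ⟩ → Step F ⟨cs', σ⟩ ⟨ds', τ⟩

/-- Renaming all variables of a corolla along a permutation. -/
def Corolla.rename {F : OpFam} (ρ : ℕ ≃ ℕ) : Corolla F → Corolla F
  | .ord f => .ord (F.ren ρ f)
  | .sp x y => .sp (ρ x) (ρ y)

/-- Renaming all variables of a Vernon graph along a permutation. -/
def EVGraph.rename {F : OpFam} (ρ : ℕ ≃ ℕ) (G : EVGraph F) : EVGraph F :=
  ⟨G.cors.map (Corolla.rename ρ), fun v => ρ (G.inv (ρ.symm v))⟩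

/-- α-equivalence of Vernon graphs: a renaming fixing the free variables turns
one into the other (up to rearranging the corollas). -/
def AlphaEq {F : OpFam} (G G' : EVGraph F) : Prop :=
  ∃ ρ : ℕ ≃ ℕ, (∀ x ∈ G.freeVars, ρ x = x) ∧
    (G.rename ρ).cors.Perm G'.cors ∧ (G.rename ρ).inv = G'.inv

/-- `N` is a normal form of `G`: reachable by reductions, with no further step. -/
def IsNf {F : OpFam} (G N : EVGraph F) : Prop :=
  Relation.ReflTransGen (Step F) G N ∧ ∀ M, ¬ Step F N M

/-- The corollas generated by the pruning algorithm `P(T, C, v)`, each with its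
distinguished entry variable: the corolla adjacent to `C` along `(v, σ v)` is
generated with distinguished variable `σ v`, and from a generated pair `(D, u)`
and an internal variable `x` of `D` other than `u` we generate the adjacent
corolla with distinguished variable `σ x`. -/
inductive Pruned {F : OpFam} (G : EVGraph F) (v : ℕ) : Corolla F → ℕ → Prop
  | base : ∀ D, D ∈ G.cors → G.inv v ∈ D.fv → Pruned G v D (G.inv v)
  | step : ∀ D u x D', Pruned G v D u → x ∈ D.fv → x ≠ u →
      x ∉ G.freeVars → D' ∈ G.cors → G.inv x ∈ D'.fv → Pruned G v D' (G.inv x)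

/-- The involution induced by `G` on a sublist of its corollas: edges internal
to the sublist are kept, all other variables become fixpoints. -/
def inducedInv {F : OpFam} (G : EVGraph F) (cs : List (Corolla F)) : ℕ → ℕ :=
  fun x =>
    if x ∈ varsL cs ∧ G.inv x ∈ varsL cs ∧ G.inv x ≠ x then G.inv x else x
open SimpleGraph

section GraphAux
variable {V : Type} [Fintype V] [DecidableEq V]

lemma conn_card_le (G : SimpleGraph V) (hc : G.Connected) :
    Fintype.card V ≤ G.edgeSet.ncard + 1 := by
  classical
  obtain ⟨r⟩ := hc.nonempty
  have key : ∀ v, v ≠ r → ∃ w, G.Adj v w ∧ G.dist w r + 1 = G.dist v r := by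
    intro v hv
    obtain ⟨p, hp, hl⟩ := hc.exists_path_of_dist v r
    cases p with
    | nil => exact absurd rfl hv
    | @cons _ b _ h q =>
      refine ⟨b, h, ?_⟩
      have h1 : G.dist b r ≤ q.length := dist_le q
      have h2 : G.dist v r ≤ G.dist v b + G.dist b r := hc.dist_triangle
      have h3 : G.dist v b = 1 := dist_eq_one_iff_adj.mpr h
      simp only [Walk.length_cons] at hl
      omega
  choose nxt hadj hdist using key
  have hmap : ∀ a ∈ Finset.univ.erase r,
      (if h : a = r then s(r, r) else s(a, nxt a h)) ∈ G.edgeSet.toFinset := by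
    intro a ha
    have h := Finset.ne_of_mem_erase ha
    rw [dif_neg h, Set.mem_toFinset, mem_edgeSet]
    exact hadj a h
  have hinj : Set.InjOn (fun a => if h : a = r then s(r, r) else s(a, nxt a h))
      (Finset.univ.erase r : Finset V) := by
    intro a ha b hb hab
    simp only [Finset.coe_erase, Set.mem_diff, Set.mem_singleton_iff] at ha hb
    dsimp only at hab
    rw [dif_neg ha.2, dif_neg hb.2] at hab
    rw [Sym2.eq_iff] at hab
    rcases hab with ⟨h1, _⟩ | ⟨h1, h2⟩
    · exact h1
    · have d1 := hdist a ha.2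
      have d2 := hdist b hb.2
      rw [← h1] at d2
      rw [h2] at d1
      omega
  have hle := Finset.card_le_card_of_injOn _ hmap hinj
  rw [Finset.card_erase_of_mem (Finset.mem_univ r), Finset.card_univ] at hle
  have hpos : 0 < Fintype.card V := @Fintype.card_pos _ _ ⟨r⟩
  rw [Set.ncard_eq_toFinset_card' G.edgeSet]
  omega

lemma isTree_of_card_le (G : SimpleGraph V) (hc : G.Connected)
    (hcard : G.edgeSet.ncard + 1 ≤ Fintype.card V) : G.IsTree := by
  classical
  refine ⟨hc, ?_⟩
  rw [isAcyclic_iff_forall_adj_isBridge]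
  intro v w hadj
  rw [isBridge_iff]
  refine fun hreach => ?_
  set G' := G \ fromEdgeSet {s(v, w)} with hG'
  have hstep : ∀ a b, G.Adj a b → G'.Reachable a b := by
    intro a b hab
    by_cases he : s(a, b) = s(v, w)
    · rw [Sym2.eq_iff] at he
      rcases he with ⟨rfl, rfl⟩ | ⟨rfl, rfl⟩
      · exact hreach
      · exact hreach.symm
    · refine Adj.reachable ?_
      rw [hG', sdiff_adj, fromEdgeSet_adj]
      exact ⟨hab, by simp [he]⟩
  have hc' : G'.Connected := by
    rw [connected_iff]
    refine ⟨?_, hc.nonempty⟩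
    intro a b
    have h := hc.preconnected a b
    rw [reachable_iff_reflTransGen] at h
    induction h with
    | refl => exact Reachable.refl _
    | tail h₁ h₂ ih => exact ih.trans (hstep _ _ h₂)
  have hES : G'.edgeSet = G.edgeSet \ {s(v, w)} := by
    ext e
    induction e with
    | _ a b =>
      simp only [mem_edgeSet, Set.mem_diff, Set.mem_singleton_iff, hG', sdiff_adj,
        fromEdgeSet_adj]
      constructor
      · rintro ⟨h1, h2⟩
        exact ⟨h1, fun he => h2 ⟨he, h1.ne⟩⟩
      · rintro ⟨h1, h2⟩
        exact ⟨h1, fun hx => h2 hx.1⟩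
  have hmem : s(v, w) ∈ G.edgeSet := hadj
  have hfin : G.edgeSet.Finite := Set.toFinite _
  have h1 : 0 < G.edgeSet.ncard := (Set.ncard_pos hfin).mpr ⟨_, hmem⟩
  have h2 := conn_card_le G' hc'
  rw [hES, Set.ncard_diff_singleton_of_mem hmem] at h2
  omega

end GraphAux

section TreeAux
variable {V : Type*} {G : SimpleGraph V}

lemma not_mem_support_aux [DecidableEq V] {k r j : V} (p : G.Walk k r)
    (hlen : p.length = G.dist k r) (hjk : j ≠ k) (hd : G.dist k r ≤ G.dist j r) :
    j ∉ p.support := by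
  intro hj
  have h1 : G.dist j r ≤ (p.dropUntil j hj).length := dist_le _
  have h2 : (p.takeUntil j hj).length + (p.dropUntil j hj).length = p.length := by
    rw [← Walk.length_append, Walk.take_spec]
  have h3 : (p.takeUntil j hj).length ≠ 0 := fun h0 =>
    hjk (Walk.eq_of_length_eq_zero h0).symm
  omega

lemma parent_unique (ht : G.IsTree) {r j k₁ k₂ : V}
    (h1 : G.Adj j k₁) (h2 : G.Adj j k₂)
    (hd1 : G.dist k₁ r + 1 = G.dist j r) (hd2 : G.dist k₂ r + 1 = G.dist j r) :
    k₁ = k₂ := by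
  classical
  obtain ⟨p₁, hp₁, hl₁⟩ := ht.isConnected.exists_path_of_dist k₁ r
  obtain ⟨p₂, hp₂, hl₂⟩ := ht.isConnected.exists_path_of_dist k₂ r
  have hj1 : j ∉ p₁.support := not_mem_support_aux p₁ hl₁ h1.ne (by omega)
  have hj2 : j ∉ p₂.support := not_mem_support_aux p₂ hl₂ h2.ne (by omega)
  have hq₁ : (Walk.cons h1 p₁).IsPath := hp₁.cons hj1
  have hq₂ : (Walk.cons h2 p₂).IsPath := hp₂.cons hj2
  obtain ⟨q, -, hq⟩ := ht.existsUnique_path j r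
  have e1 := hq _ hq₁
  have e2 := hq _ hq₂
  have := congrArg (fun w : G.Walk j r => w.getVert 1) (e1.trans e2.symm)
  simpa [Walk.getVert_cons_succ] using this

lemma adj_dist_ne (ht : G.IsTree) {r j k : V} (h : G.Adj j k) :
    G.dist j r ≠ G.dist k r := by
  classical
  intro he
  obtain ⟨p, hp, hl⟩ := ht.isConnected.exists_path_of_dist k r
  have hj : j ∉ p.support := not_mem_support_aux p hl h.ne (by omega)
  have hq : (Walk.cons h p).IsPath := hp.cons hj
  obtain ⟨p', hp', hl'⟩ := ht.isConnected.exists_path_of_dist j r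
  obtain ⟨q, -, huniq⟩ := ht.existsUnique_path j r
  have e1 := huniq _ hq
  have e2 := huniq _ hp'
  have := congrArg Walk.length (e1.trans e2.symm)
  simp only [Walk.length_cons] at this
  omega

end TreeAux

section EVAux
variable {F : OpFam}

lemma mem_varsL {cs : List (Corolla F)} {x : ℕ} :
    x ∈ varsL cs ↔ ∃ c ∈ cs, x ∈ c.fv := by
  induction cs with
  | nil => simp [varsL]
  | cons c cs ih =>
    show x ∈ c.fv ∪ varsL cs ↔ _
    rw [Finset.mem_union, ih]
    constructor
    · rintro (h | ⟨d, hd, hx⟩)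
      · exact ⟨c, List.mem_cons_self, h⟩
      · exact ⟨d, List.mem_cons_of_mem c hd, hx⟩
    · rintro ⟨d, hd, hx⟩
      rcases List.mem_cons.mp hd with rfl | hd
      · exact Or.inl hx
      · exact Or.inr ⟨d, hd, hx⟩

variable {G : EVGraph F}

lemma mem_vars_of_get {i : Fin G.cors.length} {x : ℕ} (hx : x ∈ (G.cors.get i).fv) :
    x ∈ G.vars :=
  mem_varsL.mpr ⟨_, List.get_mem _ _, hx⟩

lemma idx_unique (hWF : WF G) {i j : Fin G.cors.length} {x : ℕ}
    (hi : x ∈ (G.cors.get i).fv) (hj : x ∈ (G.cors.get j).fv) : i = j := by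
  by_contra hne
  have hp := List.pairwise_iff_get.mp hWF.disj
  rcases lt_or_gt_of_ne hne with h | h
  · exact Finset.disjoint_left.mp (hp i j h) hi hj
  · exact Finset.disjoint_left.mp (hp j i h) hj hi

lemma cor_unique (hWF : WF G) {c d : Corolla F} {x : ℕ} (hc : c ∈ G.cors) (hd : d ∈ G.cors)
    (hxc : x ∈ c.fv) (hxd : x ∈ d.fv) : c = d := by
  obtain ⟨i, rfl⟩ := List.mem_iff_get.mp hc
  obtain ⟨j, rfl⟩ := List.mem_iff_get.mp hd
  rw [idx_unique hWF hxc hxd]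

noncomputable def posIdx (G : EVGraph F) (hne : G.cors ≠ []) (x : ℕ) : Fin G.cors.length :=
  if h : ∃ i, x ∈ (G.cors.get i).fv then h.choose
  else ⟨0, List.length_pos_iff.mpr hne⟩

lemma posIdx_spec (hne : G.cors ≠ []) {x : ℕ} (hx : x ∈ G.vars) :
    x ∈ (G.cors.get (posIdx G hne x)).fv := by
  obtain ⟨c, hc, hxc⟩ := mem_varsL.mp hx
  obtain ⟨i, rfl⟩ := List.mem_iff_get.mp hc
  have h : ∃ i, x ∈ (G.cors.get i).fv := ⟨i, hxc⟩
  rw [posIdx, dif_pos h]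
  exact h.choose_spec

lemma posIdx_eq (hWF : WF G) (hne : G.cors ≠ []) {x : ℕ} {i : Fin G.cors.length}
    (hx : x ∈ (G.cors.get i).fv) : posIdx G hne x = i :=
  idx_unique hWF (posIdx_spec hne (mem_vars_of_get hx)) hx

def SG (G : EVGraph F) : SimpleGraph (Fin G.cors.length) where
  Adj i j := i ≠ j ∧ ((∃ x ∈ (G.cors.get i).fv, G.inv x ≠ x ∧ G.inv x ∈ (G.cors.get j).fv) ∨
    (∃ x ∈ (G.cors.get j).fv, G.inv x ≠ x ∧ G.inv x ∈ (G.cors.get i).fv))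
  symm := ⟨fun i j ⟨hne, h⟩ => ⟨hne.symm, h.symm⟩⟩
  loopless := ⟨fun i h => h.1 rfl⟩

lemma sg_adj (hWF : WF G) {i j : Fin G.cors.length} {x : ℕ} (hx : x ∈ (G.cors.get i).fv)
    (hinv : G.inv x ≠ x) (hxj : G.inv x ∈ (G.cors.get j).fv) : (SG G).Adj i j := by
  refine ⟨?_, Or.inl ⟨x, hx, hinv, hxj⟩⟩
  rintro rfl
  exact hWF.noloop _ (List.get_mem _ _) x hx hinv hxj

lemma sg_adj_elim (hWF : WF G) {i j : Fin G.cors.length} (h : (SG G).Adj i j) :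
    ∃ x ∈ (G.cors.get i).fv, G.inv x ≠ x ∧ G.inv x ∈ (G.cors.get j).fv := by
  rcases h.2 with h' | ⟨x, hx, hinv, hxi⟩
  · exact h'
  · refine ⟨G.inv x, hxi, ?_, ?_⟩
    · rw [hWF.invol x]; exact Ne.symm hinv
    · rw [hWF.invol x]; exact hx

lemma sg_conn (hWF : WF G) : (SG G).Connected := by
  rw [connected_iff]
  constructor
  · intro i j
    rw [reachable_iff_reflTransGen]
    refine Relation.ReflTransGen.mono ?_ _ _ (hWF.conn i j)
    rintro a b ⟨hne, x, hx, hinv, hxj⟩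
    exact ⟨hne, Or.inl ⟨x, hx, hinv, hxj⟩⟩
  · exact ⟨⟨0, List.length_pos_iff.mpr hWF.nonempty⟩⟩

end EVAux
section Counting
variable {F : OpFam} {G : EVGraph F}

lemma tree_and_unique (hWF : WF G) :
    (SG G).IsTree ∧
      ∀ {x y : ℕ} {i j : Fin G.cors.length}, x ∈ (G.cors.get i).fv → y ∈ (G.cors.get i).fv →
        G.inv x ≠ x → G.inv y ≠ y → G.inv x ∈ (G.cors.get j).fv → G.inv y ∈ (G.cors.get j).fv →
        x = y := by
  classical
  have hne := hWF.nonempty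
  have hnpos : 0 < G.cors.length := List.length_pos_iff.mpr hne
  set H : Finset ℕ := G.vars.filter (fun x => G.inv x ≠ x) with hH
  have hHcard : H.card = 2 * (G.cors.length - 1) := hWF.treeCount
  set φ : ℕ → Sym2 (Fin G.cors.length) :=
    fun x => s(posIdx G hne x, posIdx G hne (G.inv x)) with hφ
  set E : Finset (Sym2 (Fin G.cors.length)) := (SG G).edgeSet.toFinset with hE
  have hHc : ∀ {x : ℕ}, x ∈ H → x ∈ G.vars ∧ G.inv x ≠ x := by
    intro x hx
    simpa [hH, Finset.mem_filter] using hx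
  have hHi : ∀ {x : ℕ}, x ∈ G.vars → G.inv x ≠ x → x ∈ H := by
    intro x h1 h2
    simp only [hH, Finset.mem_filter]
    exact ⟨h1, h2⟩
  have hinvH : ∀ {x : ℕ}, x ∈ H → G.inv x ∈ H := by
    intro x hx
    obtain ⟨h1, h2⟩ := hHc hx
    refine hHi (hWF.closed x h1) ?_
    rw [hWF.invol x]
    exact Ne.symm h2
  have hadjφ : ∀ {x : ℕ}, x ∈ H → (SG G).Adj (posIdx G hne x) (posIdx G hne (G.inv x)) := by
    intro x hx
    obtain ⟨h1, h2⟩ := hHc hx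
    exact sg_adj hWF (posIdx_spec hne h1) h2 (posIdx_spec hne (hWF.closed x h1))
  have hφE : ∀ x ∈ H, φ x ∈ E := by
    intro x hx
    rw [hE, Set.mem_toFinset]
    exact hadjφ hx
  have hφswap : ∀ {x : ℕ}, x ∈ H → φ (G.inv x) = φ x := by
    intro x hx
    simp only [hφ, hWF.invol x]
    exact Sym2.eq_swap
  have hsum := Finset.card_eq_sum_card_fiberwise hφE
  have hfib2 : ∀ e ∈ E, 2 ≤ (H.filter (fun x => φ x = e)).card := by
    intro e he
    rw [hE, Set.mem_toFinset] at he
    induction e with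
    | _ i j =>
      obtain ⟨x, hx, hinv, hxj⟩ := sg_adj_elim hWF he
      have hxH : x ∈ H := hHi (mem_vars_of_get hx) hinv
      have hφx : φ x = s(i, j) := by
        simp only [hφ]
        rw [posIdx_eq hWF hne hx, posIdx_eq hWF hne hxj]
      have hsub2 : ({x, G.inv x} : Finset ℕ) ⊆ H.filter (fun y => φ y = s(i, j)) := by
        intro y hy
        rcases Finset.mem_insert.mp hy with rfl | hy
        · exact Finset.mem_filter.mpr ⟨hxH, hφx⟩
        · rw [Finset.mem_singleton] at hy
          subst hy
          exact Finset.mem_filter.mpr ⟨hinvH hxH, (hφswap hxH).trans hφx⟩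
      have hcard2 : ({x, G.inv x} : Finset ℕ).card = 2 :=
        Finset.card_pair (Ne.symm hinv)
      calc 2 = ({x, G.inv x} : Finset ℕ).card := hcard2.symm
        _ ≤ _ := Finset.card_le_card hsub2
  have hup : 2 * E.card ≤ H.card := by
    rw [hsum]
    calc 2 * E.card = ∑ _e ∈ E, 2 := by rw [Finset.sum_const, smul_eq_mul, mul_comm]
      _ ≤ ∑ e ∈ E, (H.filter (fun x => φ x = e)).card := Finset.sum_le_sum hfib2
  have hconn := sg_conn hWF
  have hlow := conn_card_le (SG G) hconn
  rw [Set.ncard_eq_toFinset_card' ((SG G).edgeSet), ← hE, Fintype.card_fin] at hlow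
  have hEcard : E.card = G.cors.length - 1 := by omega
  have htree : (SG G).IsTree := by
    refine isTree_of_card_le _ hconn ?_
    rw [Set.ncard_eq_toFinset_card' ((SG G).edgeSet), ← hE, Fintype.card_fin, hEcard]
    omega
  refine ⟨htree, ?_⟩
  have hfibeq : ∀ e ∈ E, (2 : ℕ) = (H.filter (fun x => φ x = e)).card := by
    refine (Finset.sum_eq_sum_iff_of_le hfib2).mp ?_
    rw [← hsum, Finset.sum_const, smul_eq_mul, hEcard, hHcard]
    ring
  intro x y i j hxi hyi hx hy hxj hyj
  have hxH : x ∈ H := hHi (mem_vars_of_get hxi) hx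
  have hyH : y ∈ H := hHi (mem_vars_of_get hyi) hy
  have hij : i ≠ j := by
    rintro rfl
    exact hWF.noloop _ (List.get_mem _ _) x hxi hx hxj
  have hφx : φ x = s(i, j) := by
    simp only [hφ]
    rw [posIdx_eq hWF hne hxi, posIdx_eq hWF hne hxj]
  have hφy : φ y = s(i, j) := by
    simp only [hφ]
    rw [posIdx_eq hWF hne hyi, posIdx_eq hWF hne hyj]
  have heE : s(i, j) ∈ E := by rw [← hφx]; exact hφE x hxH
  have hsub2 : ({x, G.inv x} : Finset ℕ) ⊆ H.filter (fun z => φ z = s(i, j)) := by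
    intro z hz
    rcases Finset.mem_insert.mp hz with rfl | hz
    · exact Finset.mem_filter.mpr ⟨hxH, hφx⟩
    · rw [Finset.mem_singleton] at hz
      subst hz
      exact Finset.mem_filter.mpr ⟨hinvH hxH, (hφswap hxH).trans hφx⟩
  have hfeq : ({x, G.inv x} : Finset ℕ) = H.filter (fun z => φ z = s(i, j)) :=
    Finset.eq_of_subset_of_card_le hsub2
      (by rw [← hfibeq _ heE, Finset.card_pair (Ne.symm hx)])
  have hyf : y ∈ ({x, G.inv x} : Finset ℕ) := by
    rw [hfeq]
    exact Finset.mem_filter.mpr ⟨hyH, hφy⟩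
  rcases Finset.mem_insert.mp hyf with rfl | hyf
  · rfl
  · rw [Finset.mem_singleton] at hyf
    exfalso
    subst hyf
    exact hij (idx_unique hWF hyi hxj)

end Counting
section PrunedAux
variable {F : OpFam} {G : EVGraph F}

lemma pruned_basic (hWF : WF G) {v : ℕ} (hvint : G.inv v ≠ v) {D : Corolla F} {u : ℕ}
    (hp : Pruned G v D u) : u ∈ D.fv ∧ D ∈ G.cors ∧ G.inv u ≠ u := by
  induction hp with
  | base D hD hfv =>
    refine ⟨hfv, hD, ?_⟩
    rw [hWF.invol v]
    exact Ne.symm hvint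
  | step D u x D' hp hx hxu hxf hD' hfv ih =>
    refine ⟨hfv, hD', ?_⟩
    rw [hWF.invol x]
    intro hxx
    apply hxf
    rw [EVGraph.freeVars, Finset.mem_filter]
    exact ⟨mem_varsL.mpr ⟨D, ih.2.1, hx⟩, hxx.symm⟩

lemma pruned_dist (hWF : WF G) {v : ℕ} (hvv : v ∈ G.vars) (hvint : G.inv v ≠ v)
    {D : Corolla F} {u : ℕ} (hp : Pruned G v D u) :
    (SG G).dist (posIdx G hWF.nonempty u) (posIdx G hWF.nonempty v) =
      (SG G).dist (posIdx G hWF.nonempty (G.inv u)) (posIdx G hWF.nonempty v) + 1 := by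
  classical
  obtain ⟨htree, huniq⟩ := tree_and_unique hWF
  induction hp with
  | base D hD hfv =>
    have hrv : v ∈ (G.cors.get (posIdx G hWF.nonempty v)).fv := posIdx_spec _ hvv
    have hiu : G.inv v ∈ (G.cors.get (posIdx G hWF.nonempty (G.inv v))).fv :=
      posIdx_spec _ (hWF.closed v hvv)
    have hadj : (SG G).Adj (posIdx G hWF.nonempty v) (posIdx G hWF.nonempty (G.inv v)) :=
      sg_adj hWF hrv hvint hiu
    have h1 : (SG G).dist (posIdx G hWF.nonempty (G.inv v)) (posIdx G hWF.nonempty v) = 1 :=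
      SimpleGraph.dist_eq_one_iff_adj.mpr hadj.symm
    have h2 : posIdx G hWF.nonempty (G.inv (G.inv v)) = posIdx G hWF.nonempty v := by
      rw [hWF.invol v]
    rw [h1, h2, SimpleGraph.dist_self]
  | step D u x D' hp hx hxu hxf hD' hfv ih =>
    obtain ⟨hu, hD, hiu⟩ := pruned_basic hWF hvint hp
    have hxv : x ∈ G.vars := mem_varsL.mpr ⟨D, hD, hx⟩
    have hxint : G.inv x ≠ x := by
      intro h
      exact hxf (Finset.mem_filter.mpr ⟨hxv, h⟩)
    obtain ⟨j0, hj0⟩ := List.mem_iff_get.mp hD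
    have hxj0 : x ∈ (G.cors.get j0).fv := by rw [hj0]; exact hx
    have huj0 : u ∈ (G.cors.get j0).fv := by rw [hj0]; exact hu
    have hpu : posIdx G hWF.nonempty u = j0 := posIdx_eq hWF _ huj0
    have hpx : posIdx G hWF.nonempty x = j0 := posIdx_eq hWF _ hxj0
    have hk : G.inv x ∈ (G.cors.get (posIdx G hWF.nonempty (G.inv x))).fv :=
      posIdx_spec _ (hWF.closed x hxv)
    have huv : u ∈ G.vars := mem_varsL.mpr ⟨D, hD, hu⟩
    have hi : G.inv u ∈ (G.cors.get (posIdx G hWF.nonempty (G.inv u))).fv :=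
      posIdx_spec _ (hWF.closed u huv)
    have hadjk : (SG G).Adj j0 (posIdx G hWF.nonempty (G.inv x)) := sg_adj hWF hxj0 hxint hk
    have hadji : (SG G).Adj j0 (posIdx G hWF.nonempty (G.inv u)) := sg_adj hWF huj0 hiu hi
    rw [hpu] at ih
    set r := posIdx G hWF.nonempty v
    set k := posIdx G hWF.nonempty (G.inv x)
    set i := posIdx G hWF.nonempty (G.inv u)
    have ht1 : (SG G).dist k r ≤ (SG G).dist k j0 + (SG G).dist j0 r :=
      htree.isConnected.dist_triangle
    have ht2 : (SG G).dist j0 r ≤ (SG G).dist j0 k + (SG G).dist k r :=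
      htree.isConnected.dist_triangle
    have he1 : (SG G).dist k j0 = 1 := SimpleGraph.dist_eq_one_iff_adj.mpr hadjk.symm
    have he2 : (SG G).dist j0 k = 1 := SimpleGraph.dist_eq_one_iff_adj.mpr hadjk
    have hne' : (SG G).dist j0 r ≠ (SG G).dist k r := adj_dist_ne htree hadjk
    have hcase : (SG G).dist k r = (SG G).dist j0 r + 1 ∨
        (SG G).dist k r + 1 = (SG G).dist j0 r := by omega
    rcases hcase with hcase | hcase
    · rw [hWF.invol x, hpx]
      exact hcase
    · exfalso
      have hki : k = i := parent_unique htree hadjk hadji hcase (by omega)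
      rw [hki] at hk
      exact hxu (huniq hxj0 huj0 hxint hiu hk hi)

lemma pruned_not_C (hWF : WF G) {C : Corolla F} {v : ℕ} (hC : C ∈ G.cors) (hv : v ∈ C.fv)
    (hvint : G.inv v ≠ v) : ¬ ∃ u, Pruned G v C u := by
  rintro ⟨u, hp⟩
  obtain ⟨hu, -, -⟩ := pruned_basic hWF hvint hp
  obtain ⟨i0, hi0⟩ := List.mem_iff_get.mp hC
  have hvv : v ∈ G.vars := mem_varsL.mpr ⟨C, hC, hv⟩
  have h1 : posIdx G hWF.nonempty u = i0 := posIdx_eq hWF _ (by rw [hi0]; exact hu)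
  have h2 : posIdx G hWF.nonempty v = i0 := posIdx_eq hWF _ (by rw [hi0]; exact hv)
  have h3 := pruned_dist hWF hvv hvint hp
  rw [h1, h2, SimpleGraph.dist_self] at h3
  omega

lemma pruned_entry_unique (hWF : WF G) {v : ℕ} (hvv : v ∈ G.vars) (hvint : G.inv v ≠ v)
    {D : Corolla F} {u u' : ℕ} (h1 : Pruned G v D u) (h2 : Pruned G v D u') : u = u' := by
  obtain ⟨htree, huniq⟩ := tree_and_unique hWF
  obtain ⟨hu, hD, hiu⟩ := pruned_basic hWF hvint h1
  obtain ⟨hu', -, hiu'⟩ := pruned_basic hWF hvint h2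
  obtain ⟨j0, hj0⟩ := List.mem_iff_get.mp hD
  have huj0 : u ∈ (G.cors.get j0).fv := by rw [hj0]; exact hu
  have huj0' : u' ∈ (G.cors.get j0).fv := by rw [hj0]; exact hu'
  have hd1 := pruned_dist hWF hvv hvint h1
  have hd2 := pruned_dist hWF hvv hvint h2
  rw [posIdx_eq hWF hWF.nonempty huj0] at hd1
  rw [posIdx_eq hWF hWF.nonempty huj0'] at hd2
  have huvars : u ∈ G.vars := mem_varsL.mpr ⟨D, hD, hu⟩
  have huvars' : u' ∈ G.vars := mem_varsL.mpr ⟨D, hD, hu'⟩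
  have hi : G.inv u ∈ (G.cors.get (posIdx G hWF.nonempty (G.inv u))).fv :=
    posIdx_spec _ (hWF.closed u huvars)
  have hi' : G.inv u' ∈ (G.cors.get (posIdx G hWF.nonempty (G.inv u'))).fv :=
    posIdx_spec _ (hWF.closed u' huvars')
  have hadj : (SG G).Adj j0 (posIdx G hWF.nonempty (G.inv u)) := sg_adj hWF huj0 hiu hi
  have hadj' : (SG G).Adj j0 (posIdx G hWF.nonempty (G.inv u')) := sg_adj hWF huj0' hiu' hi'
  have hii : posIdx G hWF.nonempty (G.inv u) = posIdx G hWF.nonempty (G.inv u') :=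
    parent_unique (r := posIdx G hWF.nonempty v) htree hadj hadj' (by omega) (by omega)
  rw [hii] at hi
  exact huniq huj0 huj0' hiu hiu' hi hi'

end PrunedAux
section IndAux
variable {F : OpFam} {G : EVGraph F}

lemma inducedInv_eq_of {cs : List (Corolla F)} {x : ℕ}
    (h : x ∈ varsL cs ∧ G.inv x ∈ varsL cs ∧ G.inv x ≠ x) :
    inducedInv G cs x = G.inv x := if_pos h

lemma inducedInv_eq_self {cs : List (Corolla F)} {x : ℕ}
    (h : ¬(x ∈ varsL cs ∧ G.inv x ∈ varsL cs ∧ G.inv x ≠ x)) :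
    inducedInv G cs x = x := if_neg h

end IndAux

/-- (Lemma 14) Pruned-subtree characterization: a subtree `T'` of the ordinary
Vernon tree `T` (given by a sub-collection `cs'` of its corollas with the
induced involution) equals the output `P(T, C, v)` of the pruning algorithm if
and only if `σ v` is free in `T'` and every other free variable of `T'` is free
in `T`. -/
theorem pruned_characterization (F : OpFam) (G : EVGraph F) (hWF : WF G)
    (hord : ∀ c ∈ G.cors, ∃ (X : Finset ℕ) (f : F.C X), c = Corolla.ord (X := X) f)
    (C : Corolla F) (hC : C ∈ G.cors) (v : ℕ) (hv : v ∈ C.fv)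
    (hvint : G.inv v ≠ v)
    (cs' : List (Corolla F)) (hsub : List.Subperm cs' G.cors) (hne : cs' ≠ [])
    (T' : EVGraph F) (hT' : T' = ⟨cs', inducedInv G cs'⟩) (hWT' : WF T') :
    ((∀ D, D ∈ cs' ↔ ∃ u, Pruned G v D u) ↔
      (G.inv v ∈ T'.freeVars ∧
        ∀ w ∈ T'.freeVars, w ≠ G.inv v → w ∈ G.freeVars)) := by
  subst hT'
  have hsubset : ∀ c ∈ cs', c ∈ G.cors := fun c hc => hsub.subset hc
  have hvv : v ∈ G.vars := mem_varsL.mpr ⟨C, hC, hv⟩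
  have hinv_vars : G.inv v ∈ G.vars := hWF.closed v hvv
  constructor
  · -- forward direction
    intro hiff
    have hCnot : C ∉ cs' := fun hCin => pruned_not_C hWF hC hv hvint ((hiff C).mp hCin)
    have hvnot : v ∉ varsL cs' := by
      intro hvin
      obtain ⟨E, hE, hvE⟩ := mem_varsL.mp hvin
      have hEC : E = C := cor_unique hWF (hsubset E hE) hC hvE hv
      exact hCnot (hEC ▸ hE)
    obtain ⟨D0, hD0, hfv0⟩ := mem_varsL.mp hinv_vars
    have hD0' : D0 ∈ cs' := (hiff D0).mpr ⟨_, Pruned.base D0 hD0 hfv0⟩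
    have hmem1 : G.inv v ∈ varsL cs' := mem_varsL.mpr ⟨D0, hD0', hfv0⟩
    have hfix : inducedInv G cs' (G.inv v) = G.inv v := by
      refine inducedInv_eq_self ?_
      rintro ⟨-, h2, -⟩
      rw [hWF.invol v] at h2
      exact hvnot h2
    constructor
    · rw [EVGraph.freeVars]
      exact Finset.mem_filter.mpr ⟨hmem1, hfix⟩
    · intro w hw hwne
      rw [EVGraph.freeVars, Finset.mem_filter] at hw
      obtain ⟨hw1, hw2⟩ := hw
      have hw1' : w ∈ varsL cs' := hw1
      have hw2' : inducedInv G cs' w = w := hw2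
      obtain ⟨E, hE, hwE⟩ := mem_varsL.mp hw1'
      have hwG : w ∈ G.vars := mem_varsL.mpr ⟨E, hsubset E hE, hwE⟩
      by_cases hwint : G.inv w = w
      · exact Finset.mem_filter.mpr ⟨hwG, hwint⟩
      exfalso
      have hinvw_not : G.inv w ∉ varsL cs' := by
        intro hmem
        rw [inducedInv_eq_of ⟨hw1', hmem, hwint⟩] at hw2'
        exact hwint hw2'
      obtain ⟨u, hpE⟩ := (hiff E).mp hE
      by_cases hwu : w = u
      · cases hpE with
        | base _ hD hfv => exact hwne hwu
        | step D u' x _ hp hx hxu hxf hD' hfv' =>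
          have hDcs : D ∈ cs' := (hiff D).mpr ⟨u', hp⟩
          apply hinvw_not
          have hwx : G.inv w = x := by rw [hwu, hWF.invol x]
          exact mem_varsL.mpr ⟨D, hDcs, hwx ▸ hx⟩
      · have hnf : w ∉ G.freeVars := fun hmem => hwint (Finset.mem_filter.mp hmem).2
        obtain ⟨D', hD'cors, hfvD'⟩ := mem_varsL.mp (hWF.closed w hwG)
        have hstep := Pruned.step E u w D' hpE hwE hwu hnf hD'cors hfvD'
        exact hinvw_not (mem_varsL.mpr ⟨D', (hiff D').mpr ⟨_, hstep⟩, hfvD'⟩)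
  · -- backward direction
    rintro ⟨hfree1, hfree2⟩
    rw [EVGraph.freeVars, Finset.mem_filter] at hfree1
    obtain ⟨hm1, hfix1⟩ := hfree1
    have hm1' : G.inv v ∈ varsL cs' := hm1
    have hfix1' : inducedInv G cs' (G.inv v) = G.inv v := hfix1
    have hCnot : C ∉ cs' := by
      intro hCin
      have hvin : v ∈ varsL cs' := mem_varsL.mpr ⟨C, hCin, hv⟩
      have hbad : inducedInv G cs' (G.inv v) = v := by
        rw [inducedInv_eq_of ⟨hm1', by rw [hWF.invol v]; exact hvin,
          by rw [hWF.invol v]; exact Ne.symm hvint⟩]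
        exact hWF.invol v
      exact hvint (hfix1'.symm.trans hbad)
    have hsup : ∀ (D : Corolla F) (u : ℕ), Pruned G v D u → D ∈ cs' := by
      intro D u hp
      induction hp with
      | base D hD hfv =>
        obtain ⟨E, hE, hfvE⟩ := mem_varsL.mp hm1'
        have hED : E = D := cor_unique hWF (hsubset E hE) hD hfvE hfv
        exact hED ▸ hE
      | step D u x D' hp hx hxu hxf hD' hfv ih =>
        by_cases hmem : G.inv x ∈ varsL cs'
        · obtain ⟨E, hE, hfvE⟩ := mem_varsL.mp hmem
          have hED : E = D' := cor_unique hWF (hsubset E hE) hD' hfvE hfv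
          exact hED ▸ hE
        · exfalso
          have hxcs : x ∈ varsL cs' := mem_varsL.mpr ⟨D, ih, hx⟩
          have hxfix : inducedInv G cs' x = x := by
            refine inducedInv_eq_self ?_
            rintro ⟨-, h2, -⟩
            exact hmem h2
          have hxT : x ∈ (EVGraph.mk cs' (inducedInv G cs')).freeVars := by
            rw [EVGraph.freeVars]
            exact Finset.mem_filter.mpr ⟨hxcs, hxfix⟩
          have hxv : x = G.inv v := by
            by_contra hne'
            exact hxf (hfree2 x hxT hne')
          have hDcors : D ∈ G.cors := (pruned_basic hWF hvint hp).2.1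
          have hb : Pruned G v D (G.inv v) := Pruned.base D hDcors (hxv ▸ hx)
          have heq := pruned_entry_unique hWF hvv hvint hp hb
          exact hxu (hxv.trans heq.symm)
    have hsub2 : ∀ D ∈ cs', ∃ u, Pruned G v D u := by
      obtain ⟨E0, hE0, hfvE0⟩ := mem_varsL.mp hm1'
      have hp0 : Pruned G v E0 (G.inv v) := Pruned.base E0 (hsubset E0 hE0) hfvE0
      obtain ⟨i0, hi0⟩ := List.mem_iff_get.mp hE0
      have main : ∀ j : Fin cs'.length, ∃ u, Pruned G v (cs'.get j) u := by
        intro j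
        have hpath := hWT'.conn i0 j
        induction hpath with
        | refl => exact ⟨_, hi0 ▸ hp0⟩
        | @tail b c h1 h2 ih =>
          obtain ⟨u, hu⟩ := ih
          obtain ⟨hne', x, hx, hindx, hxc⟩ := h2
          have hx' : x ∈ (cs'.get b).fv := hx
          have hindx' : inducedInv G cs' x ≠ x := hindx
          have hxcpre : inducedInv G cs' x ∈ (cs'.get c).fv := hxc
          have hcond : x ∈ varsL cs' ∧ G.inv x ∈ varsL cs' ∧ G.inv x ≠ x := by
            by_contra hcon
            exact hindx' (inducedInv_eq_self hcon)
          have hxc' : G.inv x ∈ (cs'.get c).fv := by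
            rw [← inducedInv_eq_of hcond]
            exact hxcpre
          have hDb : cs'.get b ∈ cs' := List.get_mem _ _
          have hDc : cs'.get c ∈ cs' := List.get_mem _ _
          by_cases hxu : x = u
          · subst hxu
            cases hu with
            | base _ hD hfv =>
              exfalso
              have hvc : v ∈ (cs'.get c).fv := by
                have : G.inv (G.inv v) = v := hWF.invol v
                rw [← this]
                exact hxc'
              have hcC : cs'.get c = C := cor_unique hWF (hsubset _ hDc) hC hvc hv
              exact hCnot (hcC ▸ hDc)
            | step D u' y _ hp hy hyu hyf hD'' hfv =>
              have hyc : y ∈ (cs'.get c).fv := by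
                have : G.inv (G.inv y) = y := hWF.invol y
                rw [← this]
                exact hxc'
              have hDcors : D ∈ G.cors := (pruned_basic hWF hvint hp).2.1
              have hcD : cs'.get c = D := cor_unique hWF (hsubset _ hDc) hDcors hyc hy
              exact ⟨u', hcD ▸ hp⟩
          · have hxG : x ∈ G.vars := mem_varsL.mpr ⟨_, hsubset _ hDb, hx'⟩
            have hnf : x ∉ G.freeVars := by
              intro hmem
              exact hcond.2.2 (Finset.mem_filter.mp hmem).2
            obtain ⟨Dc', hDc'cors, hfvDc'⟩ := mem_varsL.mp (hWF.closed x hxG)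
            exact ⟨G.inv x, Pruned.step _ u x _ hu hx' hxu hnf (hsubset _ hDc) hxc'⟩
      intro D hD
      obtain ⟨j, hj⟩ := List.mem_iff_get.mp hD
      exact hj ▸ main j
    intro D
    exact ⟨fun h => hsub2 D h, fun ⟨u, hp⟩ => hsup D u hp⟩
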